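/- Let F : ℝ^N × ℝ → ℝ be twice continuously differentiable, let w(x,y,t) = F(x,t) − F(y,t) be the difference function, and let G : ℝ^N × ℝ → ℝ^N be the map G(x,t) = (∂F/∂x_1(x,t), …, ∂F/∂x_N(x,t)). Suppose G(x₀,t₀) = 0 and the derivative DG(x₀,t₀) : ℝ^N × ℝ → ℝ^N is surjective. Then (x₀, x₀, t₀) is a critical point of w, and the kernel of the Hessian of w at (x₀, x₀, t₀) — that is, the set of vectors u ∈ ℝ^N × ℝ^N × ℝ such that the second derivative of w at (x₀, x₀, t₀), viewed as a symmetric bilinear form, satisfies D²w(u, v) = 0 for all v — equals {(ξ, ξ, τ) : DG(x₀,t₀)(ξ, τ) = 0}, which is a one-dimensional subspace of ℝ^N × ℝ^N × ℝ. -/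

import Mathlib

open ContinuousLinearMap

set_option maxHeartbeats 1000000


/-- Lemma 6.1 in analytic form: at a point of the fiberwise critical set where the
transversality (regular value) assumption holds, the diagonal point
`(x₀,x₀,t₀)` is a critical point of the difference function `w`, and the kernel
of the Hessian of `w` there is exactly the diagonal of the kernel of `DG`,
a one-dimensional subspace. -/
theorem stmt_7 {N : ℕ} (F : (Fin N → ℝ) × ℝ → ℝ) (hF : ContDiff ℝ 2 F)
    (w : (Fin N → ℝ) × (Fin N → ℝ) × ℝ → ℝ)
    (hw : ∀ x y t, w (x, y, t) = F (x, t) - F (y, t))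
    (G : (Fin N → ℝ) × ℝ → (Fin N → ℝ))
    (hG : ∀ p i, G p i = fderiv ℝ F p (Pi.single i 1, 0))
    (x₀ : Fin N → ℝ) (t₀ : ℝ)
    (hcrit : G (x₀, t₀) = 0)
    (hsurj : Function.Surjective (fderiv ℝ G (x₀, t₀))) :
    fderiv ℝ w (x₀, x₀, t₀) = 0 ∧
    {u : (Fin N → ℝ) × (Fin N → ℝ) × ℝ |
        ∀ v, fderiv ℝ (fderiv ℝ w) (x₀, x₀, t₀) u v = 0}
      = {u : (Fin N → ℝ) × (Fin N → ℝ) × ℝ |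
          u.1 = u.2.1 ∧ fderiv ℝ G (x₀, t₀) (u.1, u.2.2) = 0} ∧
    ∃ u₀ : (Fin N → ℝ) × (Fin N → ℝ) × ℝ, u₀ ≠ 0 ∧
      {u : (Fin N → ℝ) × (Fin N → ℝ) × ℝ |
          ∀ v, fderiv ℝ (fderiv ℝ w) (x₀, x₀, t₀) u v = 0}
        = (Submodule.span ℝ {u₀} : Set ((Fin N → ℝ) × (Fin N → ℝ) × ℝ)) := by
  classical
  have hdF : Differentiable ℝ F := hF.differentiable (by norm_num)
  have hdF' : Differentiable ℝ (fderiv ℝ F) :=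
    (hF.fderiv_right (m := 1) (by norm_num)).differentiable (by norm_num)
  set q₀ : (Fin N → ℝ) × ℝ := (x₀, t₀) with hq₀
  set p₀ : (Fin N → ℝ) × (Fin N → ℝ) × ℝ := (x₀, x₀, t₀) with hp₀
  set H := fderiv ℝ (fderiv ℝ F) q₀ with hHdef
  set A : ((Fin N → ℝ) × (Fin N → ℝ) × ℝ) →L[ℝ] ((Fin N → ℝ) × ℝ) :=
    (fst ℝ (Fin N → ℝ) ((Fin N → ℝ) × ℝ)).prod
      ((snd ℝ (Fin N → ℝ) ℝ).comp (snd ℝ (Fin N → ℝ) ((Fin N → ℝ) × ℝ))) with hAdef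
  set B : ((Fin N → ℝ) × (Fin N → ℝ) × ℝ) →L[ℝ] ((Fin N → ℝ) × ℝ) :=
    ((fst ℝ (Fin N → ℝ) ℝ).comp (snd ℝ (Fin N → ℝ) ((Fin N → ℝ) × ℝ))).prod
      ((snd ℝ (Fin N → ℝ) ℝ).comp (snd ℝ (Fin N → ℝ) ((Fin N → ℝ) × ℝ))) with hBdef
  have hAapp : ∀ u : (Fin N → ℝ) × (Fin N → ℝ) × ℝ, A u = (u.1, u.2.2) := fun u => rfl
  have hBapp : ∀ u : (Fin N → ℝ) × (Fin N → ℝ) × ℝ, B u = (u.2.1, u.2.2) := fun u => rfl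
  have hwA : w = fun p => F (A p) - F (B p) := by
    funext p
    obtain ⟨x, y, t⟩ := p
    exact hw x y t
  -- expansion lemma
  have expand : ∀ (φ : ((Fin N → ℝ) × ℝ) →L[ℝ] ℝ) (δ : Fin N → ℝ),
      φ (δ, 0) = ∑ i, δ i * φ (Pi.single i 1, 0) := by
    intro φ δ
    have h1 : ((δ, 0) : (Fin N → ℝ) × ℝ) = ∑ i, δ i • ((Pi.single i 1 : Fin N → ℝ), (0 : ℝ)) := by
      rw [Prod.ext_iff]
      constructor
      · rw [Prod.fst_sum]
        funext j
        simp [Finset.sum_apply, Pi.single_apply, mul_ite]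
      · rw [Prod.snd_sum]
        simp
    rw [h1, map_sum]
    refine Finset.sum_congr rfl fun i _ => ?_
    rw [map_smul, smul_eq_mul]
  -- first derivative of w
  have hDw : ∀ p, HasFDerivAt w (((fderiv ℝ F (A p)).comp A) - ((fderiv ℝ F (B p)).comp B)) p := by
    intro p
    rw [hwA]
    exact ((hdF (A p)).hasFDerivAt.comp p A.hasFDerivAt).sub
      ((hdF (B p)).hasFDerivAt.comp p B.hasFDerivAt)
  have hDw' : fderiv ℝ w = fun p => ((fderiv ℝ F (A p)).comp A) - ((fderiv ℝ F (B p)).comp B) :=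
    funext fun p => (hDw p).fderiv
  have hcrit' : ∀ i, fderiv ℝ F q₀ (Pi.single i 1, 0) = 0 := by
    intro i
    have := congrFun hcrit i
    rw [hG] at this
    simpa using this
  have first : fderiv ℝ w p₀ = 0 := by
    rw [hDw']
    refine ContinuousLinearMap.ext fun v => ?_
    have hA0 : A p₀ = q₀ := rfl
    have hB0 : B p₀ = q₀ := rfl
    simp only [hA0, hB0, ContinuousLinearMap.sub_apply, ContinuousLinearMap.comp_apply,
      ContinuousLinearMap.zero_apply, hAapp, hBapp]
    have heq : ((v.1, v.2.2) : (Fin N → ℝ) × ℝ) - (v.2.1, v.2.2) = (v.1 - v.2.1, 0) := by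
      simp [Prod.ext_iff]
    rw [← map_sub, heq, expand]
    simp [hcrit']
  -- second derivative of w
  have hΦ : ∀ C : ((Fin N → ℝ) × (Fin N → ℝ) × ℝ) →L[ℝ] ((Fin N → ℝ) × ℝ),
      C p₀ = q₀ → HasFDerivAt (fun p => (fderiv ℝ F (C p)).comp C)
      (((compL ℝ ((Fin N → ℝ) × (Fin N → ℝ) × ℝ) ((Fin N → ℝ) × ℝ) ℝ).flip C).comp (H.comp C)) p₀ := by
    intro C hC
    have h1 : HasFDerivAt (fun p => fderiv ℝ F (C p)) ((fderiv ℝ (fderiv ℝ F) (C p₀)).comp C) p₀ :=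
      (hdF' (C p₀)).hasFDerivAt.comp p₀ C.hasFDerivAt
    rw [hC] at h1
    exact ((compL ℝ ((Fin N → ℝ) × (Fin N → ℝ) × ℝ) ((Fin N → ℝ) × ℝ) ℝ).flip C).hasFDerivAt.comp p₀ h1
  have hD2w : fderiv ℝ (fderiv ℝ w) p₀ =
      (((compL ℝ ((Fin N → ℝ) × (Fin N → ℝ) × ℝ) ((Fin N → ℝ) × ℝ) ℝ).flip A).comp (H.comp A)) -
      (((compL ℝ ((Fin N → ℝ) × (Fin N → ℝ) × ℝ) ((Fin N → ℝ) × ℝ) ℝ).flip B).comp (H.comp B)) := by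
    rw [hDw']
    exact ((hΦ A rfl).sub (hΦ B rfl)).fderiv
  have hHw : ∀ u v : (Fin N → ℝ) × (Fin N → ℝ) × ℝ, fderiv ℝ (fderiv ℝ w) p₀ u v =
      H (u.1, u.2.2) (v.1, v.2.2) - H (u.2.1, u.2.2) (v.2.1, v.2.2) := by
    intro u v
    rw [hD2w]
    simp [hAapp, hBapp]
  -- derivative of G
  have hGf : G = fun p i => fderiv ℝ F p (Pi.single i 1, 0) :=
    funext fun p => funext fun i => hG p i
  have hDG : ∀ u : (Fin N → ℝ) × ℝ, fderiv ℝ G q₀ u = fun i => H u (Pi.single i 1, 0) := by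
    have hfd : HasFDerivAt G (ContinuousLinearMap.pi fun i =>
        (ContinuousLinearMap.apply ℝ ℝ ((Pi.single i 1 : Fin N → ℝ), (0 : ℝ))).comp H) q₀ := by
      rw [hGf]
      apply hasFDerivAt_pi''
      intro i
      have h2 := (ContinuousLinearMap.apply ℝ ℝ ((Pi.single i 1 : Fin N → ℝ), (0 : ℝ))).hasFDerivAt.comp q₀
        (hdF' q₀).hasFDerivAt
      rw [ContinuousLinearMap.proj_pi]
      exact h2
    intro u
    rw [hfd.fderiv]
    rfl
  -- symmetry of H
  have hsymm : ∀ u v : (Fin N → ℝ) × ℝ, H u v = H v u := hF.contDiffAt.isSymmSndFDerivAt (by norm_num)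
  set T := fderiv ℝ G q₀ with hTdef
  -- kernel equality
  have hker : {u : (Fin N → ℝ) × (Fin N → ℝ) × ℝ | ∀ v, fderiv ℝ (fderiv ℝ w) p₀ u v = 0}
      = {u : (Fin N → ℝ) × (Fin N → ℝ) × ℝ | u.1 = u.2.1 ∧ T (u.1, u.2.2) = 0} := by
    ext u
    simp only [Set.mem_setOf_eq, hHw]
    have hzero : ∀ z : (Fin N → ℝ) × ℝ, H z ((0 : Fin N → ℝ), (0 : ℝ)) = 0 := by
      intro z
      rw [show ((0 : Fin N → ℝ), (0 : ℝ)) = (0 : (Fin N → ℝ) × ℝ) from rfl, map_zero]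
    constructor
    · intro h
      have h' : ∀ (a b : Fin N → ℝ) (s : ℝ),
          H (u.1, u.2.2) (a, s) - H (u.2.1, u.2.2) (b, s) = 0 := fun a b s => h (a, b, s)
      have ha : ∀ a : Fin N → ℝ, H (u.1, u.2.2) (a, 0) = 0 := by
        intro a
        have := h' a 0 0
        rw [hzero, sub_zero] at this
        exact this
      have hb : ∀ b : Fin N → ℝ, H (u.2.1, u.2.2) (b, 0) = 0 := by
        intro b
        have := h' 0 b 0
        rw [hzero, zero_sub, neg_eq_zero] at this
        exact this
      have hs : ∀ s : ℝ, H (u.1, u.2.2) (0, s) = H (u.2.1, u.2.2) (0, s) := by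
        intro s
        have := h' 0 0 s
        rwa [sub_eq_zero] at this
      have hsplit : ∀ z : (Fin N → ℝ) × ℝ, ∀ a : Fin N → ℝ, ∀ s : ℝ,
          H z (a, s) = H z (a, 0) + H z (0, s) := by
        intro z a s
        rw [← map_add]
        norm_num
      have hz : ∀ v' : (Fin N → ℝ) × ℝ, H ((u.1 - u.2.1, 0)) v' = 0 := by
        intro v'
        obtain ⟨a, s⟩ := v'
        have hsub : ((u.1 - u.2.1, 0) : (Fin N → ℝ) × ℝ) = (u.1, u.2.2) - (u.2.1, u.2.2) := by
          simp [Prod.ext_iff]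
        have e1 := hsplit (u.1, u.2.2) a s
        have e2 := hsplit (u.2.1, u.2.2) a s
        rw [hsub, map_sub, ContinuousLinearMap.sub_apply, e1, e2, ha, hb, hs]
        ring
      have hdiag : u.1 = u.2.1 := by
        have hδ : ∀ i, (u.1 - u.2.1) i = 0 := by
          intro i
          obtain ⟨v', hv'⟩ := hsurj (Pi.single i 1)
          have hvi : ∀ j, H v' ((Pi.single j 1 : Fin N → ℝ), (0 : ℝ))
              = (Pi.single i 1 : Fin N → ℝ) j := by
            intro j
            have h3 := congrFun hv' j
            rw [hDG] at h3
            simpa using h3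
          have h0 : H v' (u.1 - u.2.1, 0) = 0 := by
            rw [← hsymm]; exact hz v'
          rw [expand] at h0
          simp only [hvi] at h0
          simpa [Pi.single_apply, mul_ite] using h0
        funext i
        have := hδ i
        simpa [sub_eq_zero] using this
      refine ⟨hdiag, ?_⟩
      rw [hDG]
      funext i
      exact ha _
    · rintro ⟨h1, h2⟩
      rw [hDG] at h2
      have hz0 : ∀ a : Fin N → ℝ, H (u.1, u.2.2) (a, 0) = 0 := by
        intro a
        rw [expand]
        simp only [congrFun h2]
        simp
      intro v
      rw [← h1]
      have hsplit : ∀ a : Fin N → ℝ, ∀ s : ℝ, H (u.1, u.2.2) (a, s)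
          = H (u.1, u.2.2) (a, 0) + H (u.1, u.2.2) (0, s) := by
        intro a s
        rw [← map_add]
        norm_num
      rw [hsplit v.1 v.2.2, hsplit v.2.1 v.2.2, hz0, hz0]
      ring
  -- rank-nullity: ker T is one-dimensional
  have hrange : LinearMap.range (T : ((Fin N → ℝ) × ℝ) →ₗ[ℝ] (Fin N → ℝ)) = ⊤ := LinearMap.range_eq_top.mpr hsurj
  have hrk : Module.finrank ℝ (LinearMap.ker (T : ((Fin N → ℝ) × ℝ) →ₗ[ℝ] (Fin N → ℝ))) = 1 := by
    have h1 := LinearMap.finrank_range_add_finrank_ker (T : ((Fin N → ℝ) × ℝ) →ₗ[ℝ] (Fin N → ℝ))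
    have h2 : LinearMap.range (T : ((Fin N → ℝ) × ℝ) →ₗ[ℝ] (Fin N → ℝ)) = ⊤ := hrange
    rw [h2, finrank_top] at h1
    have h3 : Module.finrank ℝ (Fin N → ℝ) = N := by simp
    have h4 : Module.finrank ℝ ((Fin N → ℝ) × ℝ) = N + 1 := by simp
    rw [h3, h4] at h1
    omega
  -- a generator of the kernel
  have hne : LinearMap.ker (T : ((Fin N → ℝ) × ℝ) →ₗ[ℝ] (Fin N → ℝ)) ≠ ⊥ := by
    intro hbot
    rw [hbot] at hrk
    simp at hrk
  obtain ⟨ζ, hζmem, hζne⟩ := Submodule.exists_mem_ne_zero_of_ne_bot hne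
  have hspan : LinearMap.ker (T : ((Fin N → ℝ) × ℝ) →ₗ[ℝ] (Fin N → ℝ)) = Submodule.span ℝ {ζ} := by
    refine (Submodule.eq_of_le_of_finrank_eq ?_ ?_).symm
    · rw [Submodule.span_le, Set.singleton_subset_iff]
      exact hζmem
    · rw [hrk, finrank_span_singleton hζne]
  have hTζ : T ζ = 0 := hζmem
  refine ⟨first, hker, (ζ.1, ζ.1, ζ.2), ?_, ?_⟩
  · intro hc
    apply hζne
    rw [Prod.ext_iff, Prod.ext_iff] at hc
    exact Prod.ext hc.1 hc.2.2
  · rw [hker]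
    ext u
    simp only [Set.mem_setOf_eq, SetLike.mem_coe, Submodule.mem_span_singleton]
    constructor
    · rintro ⟨h1, h2⟩
      have hm : (u.1, u.2.2) ∈ LinearMap.ker (T : ((Fin N → ℝ) × ℝ) →ₗ[ℝ] (Fin N → ℝ)) := h2
      rw [hspan] at hm
      obtain ⟨c, hc⟩ := Submodule.mem_span_singleton.mp hm
      refine ⟨c, ?_⟩
      have hc1 : c • ζ.1 = u.1 := congrArg Prod.fst hc
      have hc2 : c • ζ.2 = u.2.2 := congrArg Prod.snd hc
      refine Prod.ext hc1 (Prod.ext ?_ hc2)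
      show c • ζ.1 = u.2.1
      rw [hc1, h1]
    · rintro ⟨c, hc⟩
      have h1 : u.1 = c • ζ.1 := (congrArg Prod.fst hc).symm
      have h21 : u.2.1 = c • ζ.1 := (congrArg (fun p => p.2.1) hc).symm
      have h22 : u.2.2 = c • ζ.2 := (congrArg (fun p => p.2.2) hc).symm
      refine ⟨by rw [h1, h21], ?_⟩
      have : ((u.1, u.2.2) : (Fin N → ℝ) × ℝ) = c • ζ := by
        rw [Prod.ext_iff]
        exact ⟨h1, h22⟩
      rw [this, map_smul, hTζ, smul_zero]
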